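/- Let p < q and let a_1,…,a_p, b_1,…,b_q be positive reals satisfying e_q(b)/e_p(a) ≤ e_{q-1}(b)/e_{p-1}(a) ≤ ⋯ ≤ e_{q-p+1}(b)/e_1(a) ≤ e_{q-p}(b), so that R(x) = ∏_{i=1}^p (a_i+x) / ∏_{i=1}^q (b_i+x) is decreasing on [0,∞). Then for all x ≥ 0, pFq(a;b;x) ≤ e^{f_1 x}, where f_1 = ∏ a_i / ∏ b_i. -/

import Mathlib

open Finset Real MeasureTheory

noncomputable def rise (a : ℝ) (n : ℕ) : ℝ := ∏ k ∈ Finset.range n, (a + k)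

noncomputable def esym {q : ℕ} (k : ℕ) (a : Fin q → ℝ) : ℝ :=
  ∑ s ∈ Finset.powersetCard k (Finset.univ : Finset (Fin q)), ∏ i ∈ s, a i

lemma esym_pos {q : ℕ} {k : ℕ} (hk : k ≤ q) (a : Fin q → ℝ) (ha : ∀ i, 0 < a i) :
    0 < esym k a := by
  apply Finset.sum_pos
  · intro s _
    exact Finset.prod_pos fun i _ => ha i
  · exact Finset.powersetCard_nonempty.2 (by simpa using hk)

lemma esym_top {q : ℕ} (b : Fin q → ℝ) : esym q b = ∏ i, b i := by
  unfold esym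
  have h := Finset.powersetCard_self (Finset.univ : Finset (Fin q))
  rw [show (Finset.univ : Finset (Fin q)).card = q by simp] at h
  rw [h, Finset.sum_singleton]

lemma prod_add_esym {p : ℕ} (a : Fin p → ℝ) (x : ℝ) :
    ∏ i, (a i + x) = ∑ j ∈ Finset.range (p + 1), esym (p - j) a * x ^ j := by
  rw [Finset.prod_add]
  have hcard : (Finset.univ : Finset (Fin p)).card = p := by simp
  rw [Finset.powerset_card_disjiUnion]
  erw [Finset.sum_disjiUnion]
  rw [hcard]
  rw [← Finset.sum_range_reflect]
  apply Finset.sum_congr rfl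
  intro j hj
  rw [Finset.mem_range] at hj
  have h1 : p + 1 - 1 - j = p - j := by omega
  rw [h1]
  unfold esym
  rw [Finset.sum_mul]
  apply Finset.sum_congr rfl
  intro s hs
  rw [Finset.mem_powersetCard] at hs
  congr 1
  rw [Finset.prod_const, Finset.card_sdiff_of_subset (Finset.subset_univ s), hcard, hs.2]
  congr 1
  omega

lemma chain_le (p q : ℕ) (hpq : p < q) (a : Fin p → ℝ) (b : Fin q → ℝ)
    (ha : ∀ i, 0 < a i) (hb : ∀ i, 0 < b i)
    (hchain : ∀ j : ℕ, j < p →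
      esym (q - j) b / esym (p - j) a ≤ esym (q - j - 1) b / esym (p - j - 1) a) :
    ∀ j : ℕ, j ≤ p → esym q b * esym (p - j) a ≤ esym p a * esym (q - j) b := by
  intro j
  induction j with
  | zero => intro _; simp [mul_comm]
  | succ j ih =>
    intro hj1
    have hj : j < p := hj1
    have IH := ih (le_of_lt hj)
    have hpa : 0 < esym p a := esym_pos le_rfl a ha
    have hqb : 0 < esym q b := esym_pos le_rfl b hb
    have h1 : 0 < esym (p - j) a := esym_pos (Nat.sub_le _ _) a ha
    have h2 : 0 < esym (p - j - 1) a := esym_pos (le_trans (Nat.sub_le _ _) (Nat.sub_le _ _)) a ha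
    have h3 : 0 < esym (q - j) b := esym_pos (Nat.sub_le _ _) b hb
    have h4 : 0 < esym (q - j - 1) b := esym_pos (le_trans (Nat.sub_le _ _) (Nat.sub_le _ _)) b hb
    have hc := hchain j hj
    rw [div_le_div_iff₀ h1 h2] at hc
    have e1 : p - (j + 1) = p - j - 1 := by omega
    have e2 : q - (j + 1) = q - j - 1 := by omega
    rw [e1, e2]
    rw [← mul_le_mul_iff_of_pos_right h1]
    nlinarith [mul_le_mul_of_nonneg_right IH h2.le, mul_le_mul_of_nonneg_left hc hpa.le]

lemma key_ineq (p q : ℕ) (hpq : p < q) (a : Fin p → ℝ) (b : Fin q → ℝ)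
    (ha : ∀ i, 0 < a i) (hb : ∀ i, 0 < b i)
    (hchain : ∀ j : ℕ, j < p →
      esym (q - j) b / esym (p - j) a ≤ esym (q - j - 1) b / esym (p - j - 1) a)
    (x : ℝ) (hx : 0 ≤ x) :
    (∏ i, (a i + x)) * ∏ i, b i ≤ (∏ i, a i) * ∏ i, (b i + x) := by
  rw [prod_add_esym a x, prod_add_esym b x, ← esym_top b, ← esym_top a]
  rw [Finset.sum_mul, Finset.mul_sum]
  have hsub : Finset.range (p + 1) ⊆ Finset.range (q + 1) :=
    Finset.range_subset_range.2 (by omega)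
  refine le_trans (Finset.sum_le_sum ?_) (Finset.sum_le_sum_of_subset_of_nonneg hsub ?_)
  · intro j hj
    rw [Finset.mem_range] at hj
    have := chain_le p q hpq a b ha hb hchain j (by omega)
    calc esym (p - j) a * x ^ j * esym q b = esym q b * esym (p - j) a * x ^ j := by ring
      _ ≤ esym p a * esym (q - j) b * x ^ j :=
        mul_le_mul_of_nonneg_right this (pow_nonneg hx j)
      _ = esym p a * (esym (q - j) b * x ^ j) := by ring
  · intro j hj _
    have h3 : 0 < esym (q - j) b := esym_pos (Nat.sub_le _ _) b hb
    have hpa : 0 < esym p a := esym_pos le_rfl a ha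
    positivity

theorem stmt6 (p q : ℕ) (hpq : p < q) (a : Fin p → ℝ) (b : Fin q → ℝ)
    (ha : ∀ i, 0 < a i) (hb : ∀ i, 0 < b i)
    (hchain : ∀ j : ℕ, j < p →
      esym (q - j) b / esym (p - j) a ≤ esym (q - j - 1) b / esym (p - j - 1) a)
    (x : ℝ) (hx : 0 ≤ x) :
    (∑' n : ℕ, (∏ i, rise (a i) n) / (∏ i, rise (b i) n) * x ^ n / (Nat.factorial n))
      ≤ Real.exp ((∏ i, a i) / (∏ i, b i) * x) := by
  set c : ℝ := (∏ i, a i) / (∏ i, b i) with hc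
  have hpb : 0 < ∏ i, b i := Finset.prod_pos fun i _ => hb i
  have hpa : 0 < ∏ i, a i := Finset.prod_pos fun i _ => ha i
  have hcpos : 0 < c := div_pos hpa hpb
  -- f_n ≤ c^n
  have hfn : ∀ n : ℕ, (∏ i, rise (a i) n) / (∏ i, rise (b i) n) ≤ c ^ n := by
    intro n
    have hA : ∏ i, rise (a i) n = ∏ k ∈ Finset.range n, ∏ i, (a i + (k : ℝ)) := by
      simp only [rise]; exact Finset.prod_comm
    have hB : ∏ i, rise (b i) n = ∏ k ∈ Finset.range n, ∏ i, (b i + (k : ℝ)) := by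
      simp only [rise]; exact Finset.prod_comm
    rw [hA, hB, ← Finset.prod_div_distrib,
      show c ^ n = ∏ _k ∈ Finset.range n, c by rw [Finset.prod_const, Finset.card_range]]
    apply Finset.prod_le_prod
    · intro k _
      have h1 : 0 < ∏ i, (a i + (k : ℝ)) :=
        Finset.prod_pos fun i _ => by have := ha i; positivity
      have h2 : 0 < ∏ i, (b i + (k : ℝ)) :=
        Finset.prod_pos fun i _ => by have := hb i; positivity
      positivity
    · intro k _
      have h2 : 0 < ∏ i, (b i + (k : ℝ)) :=
        Finset.prod_pos fun i _ => by have := hb i; positivity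
      rw [div_le_div_iff₀ h2 hpb]
      have := key_ineq p q hpq a b ha hb hchain (k : ℝ) (Nat.cast_nonneg k)
      linarith
  have hfn0 : ∀ n : ℕ, 0 ≤ (∏ i, rise (a i) n) / (∏ i, rise (b i) n) := by
    intro n
    have h1 : 0 < ∏ i, rise (a i) n := Finset.prod_pos fun i _ =>
      Finset.prod_pos fun k _ => by have := ha i; positivity
    have h2 : 0 < ∏ i, rise (b i) n := Finset.prod_pos fun i _ =>
      Finset.prod_pos fun k _ => by have := hb i; positivity
    positivity
  have hterm : ∀ n : ℕ,
      (∏ i, rise (a i) n) / (∏ i, rise (b i) n) * x ^ n / (Nat.factorial n)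
        ≤ (c * x) ^ n / (Nat.factorial n) := by
    intro n
    rw [mul_pow]
    apply div_le_div_of_nonneg_right ?_ (by positivity)
    · exact mul_le_mul_of_nonneg_right (hfn n) (pow_nonneg hx n)
  have hsumexp : Summable fun n : ℕ => (c * x) ^ n / (Nat.factorial n) :=
    Real.summable_pow_div_factorial (c * x)
  have hsum : Summable fun n : ℕ =>
      (∏ i, rise (a i) n) / (∏ i, rise (b i) n) * x ^ n / (Nat.factorial n) := by
    apply Summable.of_nonneg_of_le ?_ hterm hsumexp
    intro n
    have := hfn0 n
    positivity
  calc (∑' n : ℕ, (∏ i, rise (a i) n) / (∏ i, rise (b i) n) * x ^ n / (Nat.factorial n))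
      ≤ ∑' n : ℕ, (c * x) ^ n / (Nat.factorial n) := Summable.tsum_le_tsum hterm hsum hsumexp
    _ = Real.exp (c * x) := by
        rw [Real.exp_eq_exp_ℝ, NormedSpace.exp_eq_tsum_div]
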